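/- The Fenchel primal–dual pair min_{x∈c_c} [f(Ax) + g(x)] with g ≡ 0 and sup_{y∈ℓ²} [−f*(y) − g*(−A*y)] exhibits a positive duality gap: the primal optimal value is π²/12 while the dual optimal value is 0. -/

import Mathlib

open scoped ENNReal

noncomputable section

abbrev ell2 : Type := lp (fun _ : ℕ => ℝ) 2

lemma memℓp_of_finite_support {x : ℕ → ℝ} (h : (Function.support x).Finite) :
    Memℓp x 2 := by
  apply memℓp_gen
  apply summable_of_finite_support
  refine h.subset ?_
  intro n hn
  simp only [Function.mem_support] at hn ⊢
  intro h0
  exact hn (by simp [h0])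

def ccSubmodule : Submodule ℝ ell2 where
  carrier := {x | (Function.support fun n => (x : ℕ → ℝ) n).Finite}
  add_mem' := by
    intro a b ha hb
    refine Set.Finite.subset (ha.union hb) ?_
    intro n hn
    simp only [Function.mem_support, Set.mem_union] at hn ⊢
    by_contra h
    push_neg at h
    exact hn (by simp [lp.coeFn_add, h.1, h.2])
  zero_mem' := by
    simp only [Set.mem_setOf_eq]
    convert Set.finite_empty
    ext n
    simp [lp.coeFn_zero]
  smul_mem' := by
    intro c a ha
    refine Set.Finite.subset ha ?_
    intro n hn
    simp only [Function.mem_support] at hn ⊢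
    intro h
    exact hn (by simp [lp.coeFn_smul, h])

abbrev cc : Type := ccSubmodule

def seqOf (x : cc) : ℕ → ℝ := fun n => ((x : ell2) : ℕ → ℝ) n

def fSeq (x : ℕ → ℝ) : ℝ :=
  ∑' n : ℕ, (((n : ℝ) + 1) ^ 2 / 2) * (x n - (((n : ℝ) + 1) ^ 2)⁻¹) ^ 2

def fcc (x : cc) : ℝ := fSeq (seqOf x)

/-- The standard unit sequence `e_n` as an element of `c_c`. -/
def eVec (n : ℕ) : cc :=
  ⟨lp.single 2 n (1 : ℝ), by
    refine Set.Finite.subset (Set.finite_singleton n) ?_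
    intro m hm
    simp only [Function.mem_support] at hm
    by_contra hmn
    exact hm (lp.single_apply_ne 2 n _ (by simpa using hmn))⟩

/-- The backward-difference operation on raw sequences, with `x_{-1} := 0`. -/
def Aseq (x : ℕ → ℝ) : ℕ → ℝ := fun n => x n - (if n = 0 then 0 else x (n - 1))

lemma support_Aseq {x : ℕ → ℝ} (h : (Function.support x).Finite) :
    (Function.support (Aseq x)).Finite := by
  refine Set.Finite.subset (h.union (h.image (· + 1))) ?_
  intro n hn
  simp only [Function.mem_support, Aseq] at hn
  by_contra hc
  simp only [Set.mem_union, Function.mem_support, Set.mem_image, not_or, not_exists] at hc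
  obtain ⟨h1, h2⟩ := hc
  apply hn
  rcases n with _ | m
  · simpa using h1
  · have hx1 : x (m + 1) = 0 := not_not.mp h1
    have hx : x m = 0 := by
      by_contra hxm
      exact (h2 m ⟨hxm, rfl⟩).elim
    simp [hx1, hx]

lemma mem_ccSubmodule_of_mk {x : ℕ → ℝ} (hx : Memℓp x 2)
    (h : (Function.support x).Finite) : (⟨x, hx⟩ : ell2) ∈ ccSubmodule := h

/-- The operator `A : c_c → c_c`, `(Ax)_n = x_n - x_{n-1}` (with `x_{-1} := 0`). -/
def Aop (x : cc) : cc :=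
  ⟨⟨Aseq (seqOf x), memℓp_of_finite_support (support_Aseq x.2)⟩,
    mem_ccSubmodule_of_mk _ (support_Aseq x.2)⟩

/-- The Fenchel conjugate of `f`, as a function on `ℓ²`. -/
def fstar (y : ell2) : ℝ :=
  ∑' n : ℕ, (((n : ℝ) + 1) ^ 2)⁻¹ *
    ((1 / 2) * ((y : ℕ → ℝ) n) ^ 2 + (y : ℕ → ℝ) n)

/-- The (formal) adjoint of `A`, acting on `ℓ²` sequences:
`(A*y)_n = y_n - y_{n+1}`. -/
def AstarSeq (y : ell2) : ℕ → ℝ := fun n => (y : ℕ → ℝ) n - (y : ℕ → ℝ) (n + 1)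

lemma hasSum_basel' : HasSum (fun n : ℕ => (((n : ℝ) + 1) ^ 2)⁻¹) (Real.pi ^ 2 / 6) := by
  have h := (hasSum_nat_add_iff' (f := fun n : ℕ => (1 : ℝ) / (n : ℝ) ^ 2) 1).mpr hasSum_zeta_two
  simp only [Finset.range_one, Finset.sum_singleton, Nat.cast_zero] at h
  norm_num at h
  exact h

lemma hasSum_half_basel :
    HasSum (fun n : ℕ => (1 / 2 : ℝ) * (((n : ℝ) + 1) ^ 2)⁻¹) (Real.pi ^ 2 / 12) := by
  have := hasSum_basel'.mul_left (1 / 2 : ℝ)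
  convert this using 1
  · rfl
  ring

lemma telescope (x : ℕ → ℝ) (m : ℕ) : ∑ n ∈ Finset.range (m + 1), Aseq x n = x m := by
  induction m with
  | zero => simp [Aseq]
  | succ k ih => rw [Finset.sum_range_succ, ih]; simp [Aseq]

lemma hasSum_Aseq_zero {x : ℕ → ℝ} (h : (Function.support x).Finite) :
    HasSum (Aseq x) 0 := by
  set N := h.toFinset.sup id + 1 with hN
  have hx : ∀ n, N ≤ n → x n = 0 := by
    intro n hn
    by_contra hne
    have hmem : n ∈ h.toFinset := by simpa [Function.mem_support] using hne
    have := Finset.le_sup (f := id) hmem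
    simp only [id] at this
    omega
  have hvan : ∀ n ∉ Finset.range (N + 2), Aseq x n = 0 := by
    intro n hn
    simp only [Finset.mem_range, not_lt] at hn
    have h1 : x n = 0 := hx n (by omega)
    have h2 : x (n - 1) = 0 := hx (n - 1) (by omega)
    simp [Aseq, h1, h2]
  have : HasSum (Aseq x) (∑ n ∈ Finset.range (N + 2), Aseq x n) := hasSum_sum_of_ne_finset_zero hvan
  rwa [show N + 2 = (N + 1) + 1 from rfl, telescope, hx (N + 1) (by omega)] at this

lemma fterm_eq (z : ℕ → ℝ) (n : ℕ) :
    (((n : ℝ) + 1) ^ 2 / 2) * (z n - (((n : ℝ) + 1) ^ 2)⁻¹) ^ 2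
      = (((n : ℝ) + 1) ^ 2 / 2) * (z n) ^ 2 - z n + (1 / 2) * (((n : ℝ) + 1) ^ 2)⁻¹ := by
  have h : ((n : ℝ) + 1) ≠ 0 := by positivity
  field_simp
  ring

lemma summable_quad {z : ℕ → ℝ} (h : (Function.support z).Finite) :
    Summable (fun n : ℕ => (((n : ℝ) + 1) ^ 2 / 2) * (z n) ^ 2) := by
  apply summable_of_finite_support
  refine h.subset ?_
  intro n hn
  simp only [Function.mem_support] at hn ⊢
  intro h0
  exact hn (by simp [h0])

lemma fSeq_lower_bound {z : ℕ → ℝ} (hfin : (Function.support z).Finite)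
    (hz : HasSum z 0) : Real.pi ^ 2 / 12 ≤ fSeq z := by
  have hq := summable_quad hfin
  have hlin : HasSum (fun n : ℕ => -z n + (1 / 2 : ℝ) * (((n : ℝ) + 1) ^ 2)⁻¹)
      (Real.pi ^ 2 / 12) := by
    simpa using hz.neg.add hasSum_half_basel
  have hsum : Summable
      (fun n : ℕ => (((n : ℝ) + 1) ^ 2 / 2) * (z n - (((n : ℝ) + 1) ^ 2)⁻¹) ^ 2) := by
    have heq : (fun n : ℕ => (((n : ℝ) + 1) ^ 2 / 2) * (z n - (((n : ℝ) + 1) ^ 2)⁻¹) ^ 2)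
        = fun n : ℕ => (((n : ℝ) + 1) ^ 2 / 2) * (z n) ^ 2
            + (-z n + (1 / 2 : ℝ) * (((n : ℝ) + 1) ^ 2)⁻¹) := by
      funext n; rw [fterm_eq]; ring
    rw [heq]
    exact hq.add hlin.summable
  have hle : ∀ n : ℕ, -z n + (1 / 2 : ℝ) * (((n : ℝ) + 1) ^ 2)⁻¹
      ≤ (((n : ℝ) + 1) ^ 2 / 2) * (z n - (((n : ℝ) + 1) ^ 2)⁻¹) ^ 2 := by
    intro n
    rw [fterm_eq]
    have : (0 : ℝ) ≤ (((n : ℝ) + 1) ^ 2 / 2) * (z n) ^ 2 := by positivity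
    linarith
  calc Real.pi ^ 2 / 12 = ∑' n : ℕ, (-z n + (1 / 2 : ℝ) * (((n : ℝ) + 1) ^ 2)⁻¹) :=
        hlin.tsum_eq.symm
    _ ≤ fSeq z := Summable.tsum_le_tsum hle hlin.summable hsum


/-- positive duality gap: the primal value of
`min f(Ax) + g(x)` with `g ≡ 0` is `π²/12` (attained), the dual value of
`sup -f*(y) - g*(-A*y)` is `0` (the only feasible point being `y = 0`,
since `g* = δ_{{0}}`), and `0 < π²/12`. -/
theorem positive_duality_gap :
    IsLeast {r : ℝ | ∃ x : cc, r = fcc (Aop x) + (fun _ : cc => (0 : ℝ)) x}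
      (Real.pi ^ 2 / 12) ∧
    IsGreatest {r : ℝ | ∃ y : ell2, (∀ n : ℕ, AstarSeq y n = 0) ∧ r = -fstar y}
      (0 : ℝ) ∧
    (0 : ℝ) < Real.pi ^ 2 / 12 := by
  refine ⟨⟨⟨0, ?_⟩, ?_⟩, ⟨⟨0, fun n => ?_, ?_⟩, ?_⟩, by positivity⟩
  · have h0 : seqOf (0 : cc) = 0 := by
      funext n
      simp [seqOf]
    have hA : seqOf (Aop 0) = Aseq (seqOf (0 : cc)) := rfl
    have hz : Aseq (seqOf (0 : cc)) = 0 := by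
      rw [h0]; funext n; simp [Aseq]
    have hfv : fcc (Aop 0) = Real.pi ^ 2 / 12 := by
      rw [fcc, hA, hz]
      unfold fSeq
      rw [show (fun n : ℕ => (((n : ℝ) + 1) ^ 2 / 2) * ((0 : ℕ → ℝ) n - (((n : ℝ) + 1) ^ 2)⁻¹) ^ 2)
          = fun n : ℕ => (1 / 2 : ℝ) * (((n : ℝ) + 1) ^ 2)⁻¹ from ?_]
      · exact hasSum_half_basel.tsum_eq
      · funext n
        have h : ((n : ℝ) + 1) ≠ 0 := by positivity
        simp only [Pi.zero_apply]
        field_simp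
        ring
    rw [hfv]
    ring
  · rintro r ⟨x, rfl⟩
    have hA : seqOf (Aop x) = Aseq (seqOf x) := rfl
    have hfin : (Function.support (seqOf x)).Finite := x.2
    have hle := fSeq_lower_bound (support_Aseq hfin) (hasSum_Aseq_zero hfin)
    simpa [fcc, hA] using hle
  · simp [AstarSeq]
  · have hfz : fstar 0 = 0 := by
      unfold fstar
      have heq : (fun n : ℕ => (((n : ℝ) + 1) ^ 2)⁻¹ *
          ((1 / 2) * (((0 : ell2) : ℕ → ℝ) n) ^ 2 + ((0 : ell2) : ℕ → ℝ) n))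
            = fun _ => (0 : ℝ) := by
        funext n; simp
      rw [heq, tsum_zero]
    rw [hfz]; ring
  · rintro r ⟨y, hy, rfl⟩
    have hconst : ∀ n : ℕ, (y : ℕ → ℝ) n = (y : ℕ → ℝ) 0 := by
      intro n
      induction n with
      | zero => rfl
      | succ k ih =>
        have hk := hy k
        simp only [AstarSeq, sub_eq_zero] at hk
        rw [← hk, ih]
    have h0 : (y : ℕ → ℝ) 0 = 0 := by
      by_contra h
      have hsum := (lp.memℓp y).summable (p := 2) (by norm_num)
      have htend := hsum.tendsto_atTop_zero
      have heqc : (fun n : ℕ => ‖(y : ℕ → ℝ) n‖ ^ (2 : ℝ≥0∞).toReal)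
          = fun _ : ℕ => ‖(y : ℕ → ℝ) 0‖ ^ (2 : ℝ≥0∞).toReal := by
        funext n; rw [hconst n]
      rw [heqc] at htend
      have hz0 := tendsto_nhds_unique htend tendsto_const_nhds
      have hpos : (0 : ℝ) < ‖(y : ℕ → ℝ) 0‖ ^ (2 : ℝ≥0∞).toReal :=
        Real.rpow_pos_of_pos (norm_pos_iff.mpr h) _
      rw [← hz0] at hpos
      exact lt_irrefl _ hpos
    have hall : ∀ n : ℕ, (y : ℕ → ℝ) n = 0 := fun n => (hconst n).trans h0
    have hfy : fstar y = 0 := by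
      unfold fstar
      have heq : (fun n : ℕ => (((n : ℝ) + 1) ^ 2)⁻¹ *
          ((1 / 2) * ((y : ℕ → ℝ) n) ^ 2 + (y : ℕ → ℝ) n)) = fun _ => (0 : ℝ) := by
        funext n; rw [hall n]; ring
      rw [heq, tsum_zero]
    rw [hfy, neg_zero]
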